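/- Submodularity-type inequality for the state–action cost (equation (16), key step in the proof of Theorem 1). Let V : X → ℝ be monotone with respect to ⪯ and let w ∈ W. Let X¹, X² ∈ X satisfy: A¹_{r,k} = A²_{r,k} and D¹_k = D²_k for all k; A¹_{d,k} ≥ A²_{d,k} for every k with w_k = (1,2); and A¹_{d,k} = A²_{d,k} for every other k. Then for every w' ∈ W, J_V(X¹, w) − J_V(X¹, w') ≤ J_V(X², w) − J_V(X², w'). -/

import Mathlib

namespace AoI

/-- Per-device control action: idle `(0,0)`, continue the current in-transmission
update `(1,1)`, or sample and transmit a new update `(1,2)`. -/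
inductive Act : Type
  | idle : Act
  | cont : Act
  | new  : Act
  deriving DecidableEq

instance : Fintype Act :=
  ⟨{Act.idle, Act.cont, Act.new}, by intro a; cases a <;> simp⟩

/-- Per-device state `(A_d, A_r, D)`. -/
abbrev S : Type := ℕ × ℕ × ℕ

/-- Success successor under action `(1,1)`. -/
def sCont (L Ahd Ahr : ℕ) (x : S) : S :=
  if x.2.2 = 1 then (0, min (x.1 + 1) Ahr, L)
  else (min (x.1 + 1) Ahd, min (x.2.1 + 1) Ahr, x.2.2 - 1)

/-- Failure successor under `(1,1)`; this is also the unscheduled successor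
`X_{k,un}` under action `(0,0)`. -/
def fCont (Ahd Ahr : ℕ) (x : S) : S :=
  (min (x.1 + 1) Ahd, min (x.2.1 + 1) Ahr, x.2.2)

/-- Success successor under action `(1,2)`. -/
def sNew (L Ahr : ℕ) (x : S) : S := (1, min (x.2.1 + 1) Ahr, L - 1)

/-- Failure successor under action `(1,2)`. -/
def fNew (L Ahr : ℕ) (x : S) : S := (0, min (x.2.1 + 1) Ahr, L)

/-- Per-device transition kernel `P_k(x' | x, a)`. -/
def Pk (lam : ℝ) (L Ahd Ahr : ℕ) (x x' : S) : Act → ℝ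
  | Act.idle => if x' = fCont Ahd Ahr x then 1 else 0
  | Act.cont =>
      (if x' = sCont L Ahd Ahr x then lam else 0) +
        (if x' = fCont Ahd Ahr x then 1 - lam else 0)
  | Act.new =>
      (if x' = sNew L Ahr x then lam else 0) +
        (if x' = fNew L Ahr x then 1 - lam else 0)

/-- Per-device state space `{0,…,Âd} × {0,…,Âr} × {1,…,L}`. -/
def spaceS (L Ahd Ahr : ℕ) : Finset S :=
  Finset.range (Ahd + 1) ×ˢ (Finset.range (Ahr + 1) ×ˢ Finset.Icc 1 L)

/-- Joint state space `X = X_1 × ⋯ × X_K`. -/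
def jointSpace {K : ℕ} (L Ahd Ahr : Fin K → ℕ) : Finset (Fin K → S) :=
  Fintype.piFinset fun k => spaceS (L k) (Ahd k) (Ahr k)

/-- Joint transition kernel `P(X' | X, w) = ∏ₖ P_k(X'_k | X_k, w_k)`. -/
def Pjoint {K : ℕ} (lam : Fin K → ℝ) (L Ahd Ahr : Fin K → ℕ)
    (x x' : Fin K → S) (w : Fin K → Act) : ℝ :=
  ∏ k, Pk (lam k) (L k) (Ahd k) (Ahr k) (x k) (x' k) (w k)

/-- Feasible joint actions: at most `M` devices are scheduled. -/
def feasible (K M : ℕ) : Finset (Fin K → Act) :=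
  Finset.univ.filter fun w => (Finset.univ.filter fun k => w k ≠ Act.idle).card ≤ M

lemma feasible_nonempty (K M : ℕ) : (feasible K M).Nonempty := by
  refine ⟨fun _ => Act.idle, Finset.mem_filter.mpr ⟨Finset.mem_univ _, ?_⟩⟩
  simp

/-- The state–action cost `J_V(X, w) = Σₖ A_{r,k} + Σ_{X'∈X} P(X'|X,w) V(X')`. -/
def J {K : ℕ} (lam : Fin K → ℝ) (L Ahd Ahr : Fin K → ℕ)
    (V : (Fin K → S) → ℝ) (x : Fin K → S) (w : Fin K → Act) : ℝ :=
  (∑ k, ((x k).2.1 : ℝ)) +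
    ∑ x' ∈ jointSpace L Ahd Ahr, Pjoint lam L Ahd Ahr x x' w * V x'

/-- Componentwise order on per-device states:
`(A¹_d, A¹_r, D¹) ⪯ (A²_d, A²_r, D²)` iff `A¹_d ≤ A²_d`, `A¹_r ≤ A²_r`, `D¹ = D²`. -/
def xleS (x y : S) : Prop := x.1 ≤ y.1 ∧ x.2.1 ≤ y.2.1 ∧ x.2.2 = y.2.2


/-- Success/failure probability of an action. -/
def prob (lam : ℝ) : Act → Bool → ℝ
  | Act.idle, true => 0
  | Act.idle, false => 1
  | Act.cont, true => lam
  | Act.cont, false => 1 - lam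
  | Act.new, true => lam
  | Act.new, false => 1 - lam

/-- Successor state given action and success/failure outcome. -/
def succA (L Ahd Ahr : ℕ) : Act → Bool → S → S
  | Act.idle, _, x => fCont Ahd Ahr x
  | Act.cont, true, x => sCont L Ahd Ahr x
  | Act.cont, false, x => fCont Ahd Ahr x
  | Act.new, true, x => sNew L Ahr x
  | Act.new, false, x => fNew L Ahr x

lemma prob_nonneg {lam : ℝ} (h0 : 0 < lam) (h1 : lam ≤ 1) (a : Act) (b : Bool) :
    0 ≤ prob lam a b := by
  cases a <;> cases b <;> simp [prob] <;> linarith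

lemma Pk_eq (lam : ℝ) (L Ahd Ahr : ℕ) (x x' : S) (a : Act) :
    Pk lam L Ahd Ahr x x' a =
      ∑ b : Bool, prob lam a b * (if x' = succA L Ahd Ahr a b x then 1 else 0) := by
  cases a <;> simp only [Pk, prob, Fintype.sum_bool] <;> split_ifs <;> simp_all [succA]

lemma succA_mem {L Ahd Ahr : ℕ} (hL : 2 ≤ L) (hAd : 1 ≤ Ahd) {x : S}
    (hx : x ∈ spaceS L Ahd Ahr) (a : Act) (b : Bool) :
    succA L Ahd Ahr a b x ∈ spaceS L Ahd Ahr := by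
  simp only [spaceS, Finset.mem_product, Finset.mem_range, Finset.mem_Icc] at hx ⊢
  obtain ⟨h1, h2, h3, h4⟩ := hx
  cases a <;> cases b <;>
    simp only [succA, fCont, sCont, sNew, fNew] <;>
    (try split_ifs) <;> refine ⟨?_, ?_, ?_, ?_⟩ <;> (try dsimp only) <;> omega

lemma succA_mono {L Ahd Ahr : ℕ} {x y : S} (har : x.2.1 = y.2.1) (hdd : x.2.2 = y.2.2)
    (hda : x.1 ≤ y.1) (a : Act) (b : Bool) :
    xleS (succA L Ahd Ahr a b x) (succA L Ahd Ahr a b y) := by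
  obtain ⟨xd, xr, xD⟩ := x
  obtain ⟨yd, yr, yD⟩ := y
  simp only at har hdd hda
  subst har hdd
  cases a <;> cases b <;>
    simp only [succA, fCont, sCont, sNew, fNew, xleS] <;>
    (try split_ifs) <;> refine ⟨?_, ?_, ?_⟩ <;> (try dsimp only) <;> omega

lemma prod_ind {K : ℕ} (x' y : Fin K → S) :
    (∏ k, (if x' k = y k then (1 : ℝ) else 0)) = if x' = y then 1 else 0 := by
  by_cases h : x' = y
  · simp [h]
  · obtain ⟨k, hk⟩ := Function.ne_iff.mp h
    rw [if_neg h]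
    exact Finset.prod_eq_zero (Finset.mem_univ k) (by simp [hk])

lemma sum_J_eq {K : ℕ} (lam : Fin K → ℝ) (L Ahd Ahr : Fin K → ℕ)
    (hL : ∀ k, 2 ≤ L k) (hAd : ∀ k, 1 ≤ Ahd k)
    (V : (Fin K → S) → ℝ) (x : Fin K → S) (hx : x ∈ jointSpace L Ahd Ahr)
    (w : Fin K → Act) :
    ∑ x' ∈ jointSpace L Ahd Ahr, Pjoint lam L Ahd Ahr x x' w * V x' =
      ∑ ω ∈ Fintype.piFinset (fun _ : Fin K => (Finset.univ : Finset Bool)),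
        (∏ k, prob (lam k) (w k) (ω k)) *
          V (fun k => succA (L k) (Ahd k) (Ahr k) (w k) (ω k) (x k)) := by
  have hmem : ∀ ω : Fin K → Bool,
      (fun k => succA (L k) (Ahd k) (Ahr k) (w k) (ω k) (x k)) ∈ jointSpace L Ahd Ahr := by
    intro ω
    rw [jointSpace, Fintype.mem_piFinset] at hx ⊢
    exact fun k => succA_mem (hL k) (hAd k) (hx k) _ _
  calc ∑ x' ∈ jointSpace L Ahd Ahr, Pjoint lam L Ahd Ahr x x' w * V x'
      = ∑ x' ∈ jointSpace L Ahd Ahr,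
          (∑ ω ∈ Fintype.piFinset (fun _ : Fin K => (Finset.univ : Finset Bool)),
            (∏ k, prob (lam k) (w k) (ω k)) *
              ∏ k, (if x' k = succA (L k) (Ahd k) (Ahr k) (w k) (ω k) (x k) then (1:ℝ) else 0))
            * V x' := by
        refine Finset.sum_congr rfl fun x' _ => ?_
        congr 1
        rw [Pjoint]
        simp_rw [Pk_eq]
        rw [Finset.prod_univ_sum]
        exact Finset.sum_congr rfl fun ω _ => Finset.prod_mul_distrib
    _ = ∑ ω ∈ Fintype.piFinset (fun _ : Fin K => (Finset.univ : Finset Bool)),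
          (∏ k, prob (lam k) (w k) (ω k)) *
            ∑ x' ∈ jointSpace L Ahd Ahr,
              (∏ k, (if x' k = succA (L k) (Ahd k) (Ahr k) (w k) (ω k) (x k) then (1:ℝ) else 0))
                * V x' := by
        simp_rw [Finset.sum_mul, Finset.mul_sum]
        rw [Finset.sum_comm]
        refine Finset.sum_congr rfl fun ω _ => Finset.sum_congr rfl fun x' _ => by ring
    _ = _ := by
        refine Finset.sum_congr rfl fun ω _ => ?_
        congr 1
        simp_rw [prod_ind]
        rw [Finset.sum_eq_single (fun k => succA (L k) (Ahd k) (Ahr k) (w k) (ω k) (x k))]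
        · simp
        · intro b _ hb; simp [hb]
        · intro h; exact absurd (hmem ω) h

/-- equation (16): submodularity-type inequality for the
state–action cost. -/
theorem submodularity_state_action_cost
    (K M : ℕ) (hK : 1 ≤ K) (hM1 : 1 ≤ M) (hM2 : M ≤ K)
    (lam : Fin K → ℝ) (L Ahd Ahr : Fin K → ℕ)
    (hlam : ∀ k, 0 < lam k ∧ lam k ≤ 1)
    (hL : ∀ k, 2 ≤ L k) (hAd : ∀ k, 1 ≤ Ahd k) (hAr : ∀ k, 1 ≤ Ahr k)
    (V : (Fin K → S) → ℝ)
    (hV : ∀ x1 ∈ jointSpace L Ahd Ahr, ∀ x2 ∈ jointSpace L Ahd Ahr,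
      (∀ k, xleS (x1 k) (x2 k)) → V x1 ≤ V x2)
    (w : Fin K → Act) (hw : w ∈ feasible K M)
    (x1 x2 : Fin K → S)
    (hx1 : x1 ∈ jointSpace L Ahd Ahr) (hx2 : x2 ∈ jointSpace L Ahd Ahr)
    (hr : ∀ k, (x1 k).2.1 = (x2 k).2.1)
    (hd : ∀ k, (x1 k).2.2 = (x2 k).2.2)
    (hnew : ∀ k, w k = Act.new → (x2 k).1 ≤ (x1 k).1)
    (hoth : ∀ k, w k ≠ Act.new → (x1 k).1 = (x2 k).1) :
    ∀ w' ∈ feasible K M,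
      J lam L Ahd Ahr V x1 w - J lam L Ahd Ahr V x1 w' ≤
        J lam L Ahd Ahr V x2 w - J lam L Ahd Ahr V x2 w' := by
  intro w' _
  -- Equality of states at non-new devices
  have hstate : ∀ k, w k ≠ Act.new → x1 k = x2 k := fun k hk =>
    Prod.ext (hoth k hk) (Prod.ext (hr k) (hd k))
  -- Step 1: J(x1, w) = J(x2, w)
  have key1 : J lam L Ahd Ahr V x1 w = J lam L Ahd Ahr V x2 w := by
    unfold J
    congr 1
    · exact Finset.sum_congr rfl fun k _ => by rw [hr k]
    · refine Finset.sum_congr rfl fun x' _ => ?_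
      congr 1
      refine Finset.prod_congr rfl fun k _ => ?_
      by_cases hk : w k = Act.new
      · rw [hk]
        simp only [Pk, sNew, fNew, hr k]
        congr
      · rw [hstate k hk]
  -- Step 2: J(x2, w') ≤ J(x1, w')
  have key2 : J lam L Ahd Ahr V x2 w' ≤ J lam L Ahd Ahr V x1 w' := by
    unfold J
    have hsum : (∑ k, ((x2 k).2.1 : ℝ)) = ∑ k, ((x1 k).2.1 : ℝ) :=
      Finset.sum_congr rfl fun k _ => by rw [hr k]
    rw [hsum, sum_J_eq lam L Ahd Ahr hL hAd V x2 hx2 w',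
      sum_J_eq lam L Ahd Ahr hL hAd V x1 hx1 w']
    refine add_le_add_right (Finset.sum_le_sum fun ω _ => ?_) _
    have hp : 0 ≤ ∏ k, prob (lam k) (w' k) (ω k) :=
      Finset.prod_nonneg fun k _ => prob_nonneg (hlam k).1 (hlam k).2 _ _
    refine mul_le_mul_of_nonneg_left ?_ hp
    have hm2 : (fun k => succA (L k) (Ahd k) (Ahr k) (w' k) (ω k) (x2 k)) ∈
        jointSpace L Ahd Ahr := by
      rw [jointSpace, Fintype.mem_piFinset] at hx2 ⊢
      exact fun k => succA_mem (hL k) (hAd k) (hx2 k) _ _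
    have hm1 : (fun k => succA (L k) (Ahd k) (Ahr k) (w' k) (ω k) (x1 k)) ∈
        jointSpace L Ahd Ahr := by
      rw [jointSpace, Fintype.mem_piFinset] at hx1 ⊢
      exact fun k => succA_mem (hL k) (hAd k) (hx1 k) _ _
    refine hV _ hm2 _ hm1 fun k => ?_
    refine succA_mono (hr k).symm (hd k).symm ?_ _ _
    by_cases hk : w k = Act.new
    · exact hnew k hk
    · exact le_of_eq (hoth k hk).symm
  linarith

end AoI
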